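/- arXiv:0809.3110 — 2 statements merged into one kernel-verified Lean document; each statement's English description precedes it below -/
import Mathlib

section
/- The induced homomorphism ψ : F/F₃ → ℍ (from the homomorphism Ψ sending α ↦ M(1,0,0), β ↦ M(0,1,0)) is an isomorphism between F/F₃ and the integer Heisenberg group. -/
/-! Common setup: free group on two generators, Heisenberg group of unipotent
upper-triangular 3×3 integer matrices, the Heisenberg invariant. -/

noncomputable section

open scoped commutatorElement

/-- The free group on two generators. -/
abbrev F : Type := FreeGroup Bool

/-- The generator `α` of the free group. -/
def Wα : F := FreeGroup.of false

/-- The generator `β` of the free group. -/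
def Wβ : F := FreeGroup.of true

/-- `F₃`, the third term of the lower central series `F₁ = F`, `F_{n+1} = [F, Fₙ]`
(Mathlib's `lowerCentralSeries` is 0-indexed). -/
abbrev F₃ : Subgroup F := (⊤ : Subgroup F).lowerCentralSeries 2

/-- `H = F/F₃`. -/
abbrev H : Type := F ⧸ F₃

/-- The unipotent upper-triangular matrix `M(a,b,c)`. -/
def Mmat (a b c : ℤ) : Matrix (Fin 3) (Fin 3) ℤ := !![1, a, c; 0, 1, b; 0, 0, 1]

theorem Mmat_mul (a b c a' b' c' : ℤ) :
    Mmat a b c * Mmat a' b' c' = Mmat (a + a') (b + b') (c + c' + a * b') := by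
  simp [Mmat, Matrix.mul_fin_three]; ring_nf; simp

theorem Mmat_zero : Mmat 0 0 0 = 1 := by
  simp [Mmat, Matrix.one_fin_three]

/-- `M(a,b,c)` as a unit of the matrix ring. -/
def Munit (a b c : ℤ) : (Matrix (Fin 3) (Fin 3) ℤ)ˣ :=
  ⟨Mmat a b c, Mmat (-a) (-b) (a * b - c),
    by rw [Mmat_mul]; rw [show a + -a = 0 by ring, show b + -b = 0 by ring,
      show c + (a*b - c) + a * (-b) = 0 by ring]; exact Mmat_zero,
    by rw [Mmat_mul]; rw [show -a + a = 0 by ring, show -b + b = 0 by ring,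
      show (a*b - c) + c + (-a) * b = 0 by ring]; exact Mmat_zero⟩

theorem Munit_mul (a b c a' b' c' : ℤ) :
    Munit a b c * Munit a' b' c' = Munit (a + a') (b + b') (c + c' + a * b') :=
  Units.ext (Mmat_mul a b c a' b' c')

theorem Munit_one : Munit 0 0 0 = 1 := Units.ext Mmat_zero

theorem Munit_inv (a b c : ℤ) : (Munit a b c)⁻¹ = Munit (-a) (-b) (a * b - c) :=
  Units.ext rfl

theorem Munit_congr {a b c a' b' c' : ℤ} (h1 : a = a') (h2 : b = b') (h3 : c = c') :
    Munit a b c = Munit a' b' c' := by subst h1; subst h2; subst h3; rfl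

/-- The integer Heisenberg group, as the subgroup of units of the `3×3` integer
matrix ring consisting of the unipotent upper-triangular matrices `M(a,b,c)`. -/
def Heis : Subgroup (Matrix (Fin 3) (Fin 3) ℤ)ˣ where
  carrier := {x | ∃ a b c : ℤ, x = Munit a b c}
  one_mem' := ⟨0, 0, 0, Munit_one.symm⟩
  mul_mem' := by
    rintro x y ⟨a, b, c, rfl⟩ ⟨a', b', c', rfl⟩
    exact ⟨_, _, _, Munit_mul a b c a' b' c'⟩
  inv_mem' := by
    rintro x ⟨a, b, c, rfl⟩
    exact ⟨_, _, _, Munit_inv a b c⟩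

/-- The homomorphism `Ψ : F → ℍ` with `Ψ(α) = M(1,0,0)` and `Ψ(β) = M(0,1,0)`. -/
def Ψ : F →* (Matrix (Fin 3) (Fin 3) ℤ)ˣ :=
  FreeGroup.lift fun x => if x then Munit 0 1 0 else Munit 1 0 0

theorem Ψ_mem (g : F) : Ψ g ∈ Heis := by
  induction g using FreeGroup.induction_on with
  | C1 => exact Heis.one_mem
  | of x => cases x <;> · show Ψ (FreeGroup.of _) ∈ Heis; rw [Ψ, FreeGroup.lift_apply_of]; exact ⟨_, _, _, rfl⟩
  | inv_of x hx => rw [map_inv]; exact Heis.inv_mem hx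
  | mul x y hx hy => rw [map_mul]; exact Heis.mul_mem hx hy

theorem Munit_commutator (a b c a' b' c' : ℤ) :
    ⁅Munit a b c, Munit a' b' c'⁆ = Munit 0 0 (a * b' - a' * b) := by
  rw [commutatorElement_def, Munit_inv, Munit_inv, Munit_mul, Munit_mul, Munit_mul]
  exact Munit_congr (by ring) (by ring) (by ring)

theorem Munit_central (z a b c : ℤ) : Munit 0 0 z * Munit a b c = Munit a b c * Munit 0 0 z := by
  rw [Munit_mul, Munit_mul]; exact Munit_congr (by ring) (by ring) (by ring)

theorem Heis_comm_central (g : F) (hg : g ∈ (⁅(⊤ : Subgroup F), ⊤⁆ : Subgroup F)) :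
    Ψ g ∈ Subgroup.centralizer (Heis : Set (Matrix (Fin 3) (Fin 3) ℤ)ˣ) := by
  have hle : (⁅(⊤ : Subgroup F), ⊤⁆ : Subgroup F) ≤
      Subgroup.comap Ψ (Subgroup.centralizer (Heis : Set (Matrix (Fin 3) (Fin 3) ℤ)ˣ)) := by
    rw [Subgroup.commutator_le]
    intro g₁ _ g₂ _
    rw [Subgroup.mem_comap, map_commutatorElement]
    obtain ⟨a, b, c, h1⟩ := Ψ_mem g₁
    obtain ⟨a', b', c', h2⟩ := Ψ_mem g₂
    rw [h1, h2, Munit_commutator]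
    rw [Subgroup.mem_centralizer_iff]
    rintro x ⟨p, q, r, rfl⟩
    exact (Munit_central _ _ _ _).symm
  exact hle hg

theorem F₃_le_ker : F₃ ≤ Ψ.ker := by
  show ⁅(⁅(⊤ : Subgroup F), ⊤⁆ : Subgroup F), ⊤⁆ ≤ Ψ.ker
  rw [Subgroup.commutator_le]
  intro g hg h _
  rw [MonoidHom.mem_ker, map_commutatorElement]
  have hc : Ψ h * Ψ g = Ψ g * Ψ h :=
    Subgroup.mem_centralizer_iff.mp (Heis_comm_central g hg) (Ψ h) (Ψ_mem h)
  rw [commutatorElement_def, ← hc]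
  group

/-- The induced homomorphism `ψ : H = F/F₃ → ℍ`. -/
def ψH : H →* Heis :=
  QuotientGroup.lift F₃ (Ψ.codRestrict Heis Ψ_mem)
    (fun g hg => by
      have : Ψ g = 1 := F₃_le_ker hg
      exact Subtype.ext (by simpa using this))

/-- The matrix of the image of `g ∈ H` in the Heisenberg group. -/
def mat (g : H) : Matrix (Fin 3) (Fin 3) ℤ := ((ψH g : (Matrix (Fin 3) (Fin 3) ℤ)ˣ) : Matrix (Fin 3) (Fin 3) ℤ)

/-- `a(g)`: the exponent sum of `α` in `g` (the `(0,1)` entry of the Heisenberg matrix). -/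
def aH (g : H) : ℤ := mat g 0 1

/-- `b(g)`: the exponent sum of `β` in `g` (the `(1,2)` entry of the Heisenberg matrix). -/
def bH (g : H) : ℤ := mat g 1 2

/-- The Heisenberg invariant `ν(g)` of `g ∈ H`: the exponent of the central element
`[α,β]` in the unique normal form `g = [α,β]^ν α^a β^b`. -/
def νH (g : H) : ℤ := mat g 0 2 - aH g * bH g

/-- `a(g)` for a word `g` in the free group. -/
def aF (g : F) : ℤ := aH (QuotientGroup.mk g)

/-- `b(g)` for a word `g` in the free group. -/
def bF (g : F) : ℤ := bH (QuotientGroup.mk g)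

/-- The Heisenberg invariant of a word in the free group: the Heisenberg invariant of its
image in `H = F/F₃`. -/
def νF (g : F) : ℤ := νH (QuotientGroup.mk g)


/-! ### Auxiliary lemmas for statement 3 -/

theorem Munit_inj {a b c a' b' c' : ℤ} (h : Munit a b c = Munit a' b' c') :
    a = a' ∧ b = b' ∧ c = c' := by
  have h2 : Mmat a b c = Mmat a' b' c' := congrArg Units.val h
  refine ⟨?_, ?_, ?_⟩
  · have := congrFun (congrFun h2 0) 1; simpa [Mmat] using this
  · have := congrFun (congrFun h2 1) 2; simpa [Mmat] using this
  · have := congrFun (congrFun h2 0) 2; simpa [Mmat] using this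

theorem Munit_pow (a b c : ℤ) (h : a * b = 0) (n : ℕ) :
    (Munit a b c) ^ n = Munit (n * a) (n * b) (n * c) := by
  induction n with
  | zero => simpa using Munit_one.symm
  | succ n ih =>
      rw [pow_succ, ih, Munit_mul]
      exact Munit_congr (by push_cast; ring) (by push_cast; ring)
        (by push_cast; linear_combination (n : ℤ) * h)

theorem Munit_zpow (a b c : ℤ) (h : a * b = 0) (n : ℤ) :
    (Munit a b c) ^ n = Munit (n * a) (n * b) (n * c) := by
  cases n with
  | ofNat m => rw [Int.ofNat_eq_coe, zpow_natCast, Munit_pow a b c h m]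
  | negSucc m =>
      rw [zpow_negSucc, Munit_pow a b c h, Munit_inv, Int.negSucc_eq]
      push_cast
      exact Munit_congr (by ring) (by ring)
        (by linear_combination ((m : ℤ) + 1) ^ 2 * h)

theorem Ψ_α : Ψ Wα = Munit 1 0 0 := by
  rw [Ψ, Wα, FreeGroup.lift_apply_of]; simp

theorem Ψ_β : Ψ Wβ = Munit 0 1 0 := by
  rw [Ψ, Wβ, FreeGroup.lift_apply_of]; simp

theorem Ψ_γ : Ψ ⁅Wα, Wβ⁆ = Munit 0 0 1 := by
  rw [map_commutatorElement, Ψ_α, Ψ_β, Munit_commutator]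
  norm_num

/-- The image of `α` in `H`. -/
def Aq : H := QuotientGroup.mk Wα
/-- The image of `β` in `H`. -/
def Bq : H := QuotientGroup.mk Wβ
/-- The image of `[α,β]` in `H`. -/
def Cq : H := QuotientGroup.mk ⁅Wα, Wβ⁆

theorem Cq_central (h : H) : Commute Cq h := by
  induction h using QuotientGroup.induction_on with
  | H g =>
    have hmem : ⁅g, (⁅Wα, Wβ⁆ : F)⁆ ∈ F₃ := by
      have hF3 : F₃ = ⁅(⁅(⊤ : Subgroup F), ⊤⁆ : Subgroup F), (⊤ : Subgroup F)⁆ := rfl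
      rw [hF3, Subgroup.commutator_comm]
      exact Subgroup.commutator_mem_commutator (Subgroup.mem_top g)
        (Subgroup.commutator_mem_commutator (Subgroup.mem_top _) (Subgroup.mem_top _))
    have h1 : ⁅(QuotientGroup.mk g : H), Cq⁆ = 1 := by
      show ⁅QuotientGroup.mk' F₃ g, QuotientGroup.mk' F₃ ⁅Wα, Wβ⁆⁆ = 1
      rw [← map_commutatorElement]
      rw [QuotientGroup.mk'_apply, QuotientGroup.eq_one_iff]
      exact hmem
    exact (commutatorElement_eq_one_iff_commute.mp h1).symm

theorem BA_swap : Bq * Aq = Cq⁻¹ * Aq * Bq := by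
  show QuotientGroup.mk (Wβ * Wα) = QuotientGroup.mk (⁅Wα, Wβ⁆⁻¹ * Wα * Wβ)
  congr 1
  group

theorem B'A_swap : Bq⁻¹ * Aq = Cq * Aq * Bq⁻¹ := by
  have e1 : Bq * Aq * Bq⁻¹ = Cq⁻¹ * Aq := by rw [BA_swap]; group
  have e2 : Cq * (Bq * Aq * Bq⁻¹) = Bq * (Cq * Aq) * Bq⁻¹ := by
    calc Cq * (Bq * Aq * Bq⁻¹) = (Cq * Bq) * (Aq * Bq⁻¹) := by group
      _ = (Bq * Cq) * (Aq * Bq⁻¹) := by rw [(Cq_central Bq).eq]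
      _ = Bq * (Cq * Aq) * Bq⁻¹ := by group
  calc Bq⁻¹ * Aq = Bq⁻¹ * (Cq * (Cq⁻¹ * Aq)) := by group
    _ = Bq⁻¹ * (Cq * (Bq * Aq * Bq⁻¹)) := by rw [e1]
    _ = Bq⁻¹ * (Bq * (Cq * Aq) * Bq⁻¹) := by rw [e2]
    _ = Cq * Aq * Bq⁻¹ := by group

theorem BA_pow (a : ℤ) : Bq * Aq ^ a = Cq ^ (-a) * Aq ^ a * Bq := by
  have hs : SemiconjBy Bq Aq (Cq⁻¹ * Aq) := by
    unfold SemiconjBy; rw [BA_swap, mul_assoc]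
  have h := hs.zpow_right a
  rw [SemiconjBy] at h
  rw [h, ((Cq_central Aq).inv_left).mul_zpow, inv_zpow, ← zpow_neg]

theorem B'A_pow (a : ℤ) : Bq⁻¹ * Aq ^ a = Cq ^ a * Aq ^ a * Bq⁻¹ := by
  have hs : SemiconjBy Bq⁻¹ Aq (Cq * Aq) := by
    unfold SemiconjBy; rw [B'A_swap, mul_assoc]
  have h := hs.zpow_right a
  rw [SemiconjBy] at h
  rw [h, (Cq_central Aq).mul_zpow]

theorem normal_form_mul (g : F) : ∀ a b c : ℤ,
    ∃ a' b' c' : ℤ, (QuotientGroup.mk g : H) * (Cq ^ c * Aq ^ a * Bq ^ b)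
      = Cq ^ c' * Aq ^ a' * Bq ^ b' := by
  induction g using FreeGroup.induction_on with
  | C1 => intro a b c; exact ⟨a, b, c, one_mul _⟩
  | of x =>
      intro a b c
      cases x with
      | false =>
          refine ⟨a + 1, b, c, ?_⟩
          show Aq * (Cq ^ c * Aq ^ a * Bq ^ b) = Cq ^ c * Aq ^ (a + 1) * Bq ^ b
          calc Aq * (Cq ^ c * Aq ^ a * Bq ^ b)
              = Aq * Cq ^ c * (Aq ^ a * Bq ^ b) := by group
            _ = Cq ^ c * Aq * (Aq ^ a * Bq ^ b) := by
                rw [← ((Cq_central Aq).zpow_left c).eq]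
            _ = Cq ^ c * Aq ^ (a + 1) * Bq ^ b := by group
      | true =>
          refine ⟨a, b + 1, c - a, ?_⟩
          show Bq * (Cq ^ c * Aq ^ a * Bq ^ b) = Cq ^ (c - a) * Aq ^ a * Bq ^ (b + 1)
          calc Bq * (Cq ^ c * Aq ^ a * Bq ^ b)
              = Bq * Cq ^ c * (Aq ^ a * Bq ^ b) := by group
            _ = Cq ^ c * (Bq * Aq ^ a) * Bq ^ b := by
                rw [← ((Cq_central Bq).zpow_left c).eq]; group
            _ = Cq ^ c * (Cq ^ (-a) * Aq ^ a * Bq) * Bq ^ b := by rw [BA_pow]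
            _ = Cq ^ (c - a) * Aq ^ a * Bq ^ (b + 1) := by group
  | inv_of x ih =>
      intro a b c
      clear ih
      cases x with
      | false =>
          refine ⟨a - 1, b, c, ?_⟩
          show Aq⁻¹ * (Cq ^ c * Aq ^ a * Bq ^ b) = Cq ^ c * Aq ^ (a - 1) * Bq ^ b
          calc Aq⁻¹ * (Cq ^ c * Aq ^ a * Bq ^ b)
              = Aq⁻¹ * Cq ^ c * (Aq ^ a * Bq ^ b) := by group
            _ = Cq ^ c * Aq⁻¹ * (Aq ^ a * Bq ^ b) := by
                rw [← ((Cq_central Aq⁻¹).zpow_left c).eq]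
            _ = Cq ^ c * Aq ^ (a - 1) * Bq ^ b := by group
      | true =>
          refine ⟨a, b - 1, c + a, ?_⟩
          show Bq⁻¹ * (Cq ^ c * Aq ^ a * Bq ^ b) = Cq ^ (c + a) * Aq ^ a * Bq ^ (b - 1)
          calc Bq⁻¹ * (Cq ^ c * Aq ^ a * Bq ^ b)
              = Bq⁻¹ * Cq ^ c * (Aq ^ a * Bq ^ b) := by group
            _ = Cq ^ c * (Bq⁻¹ * Aq ^ a) * Bq ^ b := by
                rw [← ((Cq_central Bq⁻¹).zpow_left c).eq]; group
            _ = Cq ^ c * (Cq ^ a * Aq ^ a * Bq⁻¹) * Bq ^ b := by rw [B'A_pow]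
            _ = Cq ^ (c + a) * Aq ^ a * Bq ^ (b - 1) := by group
  | mul x y ihx ihy =>
      intro a b c
      obtain ⟨a', b', c', hy⟩ := ihy a b c
      obtain ⟨a'', b'', c'', hx⟩ := ihx a' b' c'
      refine ⟨a'', b'', c'', ?_⟩
      rw [show (QuotientGroup.mk (x * y) : H)
          = QuotientGroup.mk x * QuotientGroup.mk y from rfl, mul_assoc, hy, hx]

theorem normal_form (h : H) : ∃ a b c : ℤ, h = Cq ^ c * Aq ^ a * Bq ^ b := by
  induction h using QuotientGroup.induction_on with
  | H g =>
    obtain ⟨a, b, c, hg⟩ := normal_form_mul g 0 0 0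
    exact ⟨a, b, c, by rw [zpow_zero, zpow_zero, zpow_zero, one_mul, one_mul] at hg; exact (mul_one _).symm.trans hg⟩

theorem ψH_normal (a b c : ℤ) :
    ((ψH (Cq ^ c * Aq ^ a * Bq ^ b) : Heis) : (Matrix (Fin 3) (Fin 3) ℤ)ˣ)
      = Munit a b (c + a * b) := by
  have hw : Cq ^ c * Aq ^ a * Bq ^ b
      = QuotientGroup.mk (⁅Wα, Wβ⁆ ^ c * Wα ^ a * Wβ ^ b) := by
    rw [show (QuotientGroup.mk : F → H) = QuotientGroup.mk' F₃ from rfl]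
    rw [map_mul, map_mul, map_zpow, map_zpow, map_zpow]
    rfl
  rw [hw]
  show Ψ (⁅Wα, Wβ⁆ ^ c * Wα ^ a * Wβ ^ b) = _
  rw [map_mul, map_mul, map_zpow, map_zpow, map_zpow, Ψ_α, Ψ_β, Ψ_γ,
    Munit_zpow 0 0 1 (by ring), Munit_zpow 1 0 0 (by ring), Munit_zpow 0 1 0 (by ring),
    Munit_mul, Munit_mul]
  exact Munit_congr (by ring) (by ring) (by ring)

/-- the homomorphism `ψ : F/F₃ → ℍ` induced by `Ψ` (with
`α ↦ M(1,0,0)`, `β ↦ M(0,1,0)`) is an isomorphism onto the integer Heisenberg group. -/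
theorem statement_3 : Function.Bijective ψH := by
  constructor
  · refine (injective_iff_map_eq_one ψH).mpr ?_
    intro h hone
    obtain ⟨a, b, c, rfl⟩ := normal_form h
    have h1 : ((ψH (Cq ^ c * Aq ^ a * Bq ^ b) : Heis) : (Matrix (Fin 3) (Fin 3) ℤ)ˣ)
        = Munit a b (c + a * b) := ψH_normal a b c
    rw [hone] at h1
    have h2 : Munit 0 0 0 = Munit a b (c + a * b) := by
      rw [← h1, Munit_one]; rfl
    obtain ⟨ha, hb, hc⟩ := Munit_inj h2
    have ha' : a = 0 := ha.symm
    have hb' : b = 0 := hb.symm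
    subst ha'; subst hb'
    have hc' : c = 0 := by simpa using hc.symm
    subst hc'
    simp
  · rintro ⟨x, a, b, c, rfl⟩
    refine ⟨Cq ^ (c - a * b) * Aq ^ a * Bq ^ b, ?_⟩
    apply Subtype.ext
    rw [ψH_normal]
    exact Munit_congr rfl rfl (by ring)

end
end

section
/- Let g be a word of length n in α, α⁻¹, β, β⁻¹ with a(g) = b(g) = 0. If ν(g) = (n/4)², then n_α = n_β = n/4 and g is conjugate in F (equivalently its image in H equals, up to conjugation and free reduction) to the commutator [α^{n/4}, β^{n/4}]. -/
/-! Common setup: free group on two generators, Heisenberg group of unipotent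
upper-triangular 3×3 integer matrices, the Heisenberg invariant. -/

noncomputable section

open scoped commutatorElement

/-! Words in the letters α, α⁻¹, β, β⁻¹ and foldings (RNA secondary structures). -/

/-- A letter is a pair `(x, s)` (the `FreeGroup` convention): `s = true` for a generator,
`s = false` for its inverse. -/
abbrev Letter : Type := Bool × Bool

/-- A word in the letters `α`, `α⁻¹`, `β`, `β⁻¹`. -/
abbrev Word : Type := List Letter

/-- The letter `α`. -/
def lα : Letter := (false, true)
/-- The letter `α⁻¹`. -/
def lαinv : Letter := (false, false)
/-- The letter `β`. -/
def lβ : Letter := (true, true)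
/-- The letter `β⁻¹`. -/
def lβinv : Letter := (true, false)

/-- The exponent sum of `α` in a word: #`α` − #`α⁻¹`. -/
def aw (w : Word) : ℤ := (w.count lα : ℤ) - (w.count lαinv : ℤ)

/-- The exponent sum of `β` in a word: #`β` − #`β⁻¹`. -/
def bw (w : Word) : ℤ := (w.count lβ : ℤ) - (w.count lβinv : ℤ)

/-- The cyclic subword `w(i,j)` strictly between positions `i` and `j` (`0`-indexed),
read counterclockwise: if `i < j` it is `l_{i+1} ⋯ l_{j-1}`, and if `i > j` it is
`l_{i+1} ⋯ l_n l_1 ⋯ l_{j-1}` (0-indexed: wraps around the end). -/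
def between (w : Word) (i j : ℕ) : Word :=
  if i < j then (w.drop (i + 1)).take (j - i - 1) else w.drop (i + 1) ++ w.take j

/-- A folding (RNA secondary structure without pseudo-knots) of the cyclic word `w`:
a collection of disjoint pairs `(i,j)` of positions with `l_i ∈ {α, β}` and `l_j` the
inverse letter, subject to the non-nesting (no pseudo-knot) condition. -/
structure Folding (w : Word) where
  /-- The set of paired positions. -/
  pairs : Finset (Fin w.length × Fin w.length)
  ne : ∀ p ∈ pairs, p.1 ≠ p.2
  matched : ∀ p ∈ pairs,
    (w.get p.1 = lα ∧ w.get p.2 = lαinv) ∨ (w.get p.1 = lβ ∧ w.get p.2 = lβinv)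
  disjoint : ∀ p ∈ pairs, ∀ q ∈ pairs, p ≠ q →
    p.1 ≠ q.1 ∧ p.1 ≠ q.2 ∧ p.2 ≠ q.1 ∧ p.2 ≠ q.2
  nonnested : ∀ p ∈ pairs, ∀ q ∈ pairs,
    (p.1 < q.1 ∧ q.1 < p.2 → p.1 < q.2 ∧ q.2 < p.2) ∧
    (p.2 < q.1 ∧ q.1 < p.1 → p.2 < q.2 ∧ q.2 < p.1)

/-- A complete `α`-folding: every pair is an `α`-pair and every occurrence of the
letter `α` is paired. -/
def Folding.IsCompleteAlpha {w : Word} (𝓕 : Folding w) : Prop :=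
  (∀ p ∈ 𝓕.pairs, w.get p.1 = lα) ∧
    ∀ i : Fin w.length, w.get i = lα → ∃ p ∈ 𝓕.pairs, p.1 = i

/-- letters exhaust -/
theorem letter_cases (l : Letter) : l = lα ∨ l = lαinv ∨ l = lβ ∨ l = lβinv := by
  rcases l with ⟨b, s⟩; cases b <;> cases s <;> simp [lα, lαinv, lβ, lβinv]

/-- x-step of a letter -/
def xL (l : Letter) : ℤ := if l.1 then 0 else (if l.2 then 1 else -1)
/-- y-step of a letter -/
def yL (l : Letter) : ℤ := if l.1 then (if l.2 then 1 else -1) else 0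

/-- sum of x-steps -/
def S1 (w : Word) : ℤ := (w.map xL).sum
/-- sum of y-steps -/
def S2 (w : Word) : ℤ := (w.map yL).sum
/-- the double-sum Σ_{i<j} x_i y_j -/
def S3 : Word → ℤ
  | [] => 0
  | l :: t => S3 t + xL l * S2 t

@[simp] theorem S1_nil : S1 [] = 0 := rfl
@[simp] theorem S2_nil : S2 [] = 0 := rfl
@[simp] theorem S3_nil : S3 [] = 0 := rfl
@[simp] theorem S1_cons (l : Letter) (t : Word) : S1 (l :: t) = xL l + S1 t := by
  simp [S1]
@[simp] theorem S2_cons (l : Letter) (t : Word) : S2 (l :: t) = yL l + S2 t := by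
  simp [S2]
@[simp] theorem S3_cons (l : Letter) (t : Word) : S3 (l :: t) = S3 t + xL l * S2 t := rfl
theorem S1_append (u v : Word) : S1 (u ++ v) = S1 u + S1 v := by simp [S1]
theorem S2_append (u v : Word) : S2 (u ++ v) = S2 u + S2 v := by simp [S2]

theorem Psi_mk (w : Word) : Ψ (FreeGroup.mk w) = Munit (S1 w) (S2 w) (S3 w) := by
  induction w with
  | nil =>
    have : FreeGroup.mk ([] : Word) = (1 : F) := rfl
    rw [this, map_one]; simp; exact Munit_one.symm
  | cons l t ih =>
    have h1 : FreeGroup.mk (l :: t) = FreeGroup.mk [l] * FreeGroup.mk t := by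
      rw [FreeGroup.mul_mk]; rfl
    have h2 : Ψ (FreeGroup.mk [l]) = Munit (xL l) (yL l) 0 := by
      rcases letter_cases l with h | h | h | h <;> subst h <;>
        · rw [Ψ, FreeGroup.lift_mk]
          simp [lα, lαinv, lβ, lβinv, xL, yL, Munit_inv]
    rw [h1, map_mul, h2, ih, Munit_mul]
    exact Munit_congr (by simp) (by simp) (by simp) 

theorem mat_mk (w : Word) :
    mat (QuotientGroup.mk (FreeGroup.mk w)) = Mmat (S1 w) (S2 w) (S3 w) := by
  rw [mat]
  show ((Ψ (FreeGroup.mk w) : (Matrix (Fin 3) (Fin 3) ℤ)ˣ) : Matrix (Fin 3) (Fin 3) ℤ) = _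
  rw [Psi_mk]; rfl

theorem aF_mk (w : Word) : aF (FreeGroup.mk w) = S1 w := by
  rw [aF, aH, mat_mk]; simp [Mmat]
theorem bF_mk (w : Word) : bF (FreeGroup.mk w) = S2 w := by
  rw [bF, bH, mat_mk]; simp [Mmat]
theorem nuF_mk (w : Word) : νF (FreeGroup.mk w) = S3 w - S1 w * S2 w := by
  rw [νF, νH, aH, bH, mat_mk]; simp [Mmat]

/-- partial x-sums: the A-coordinate after reading `t` letters -/
def AS (w : Word) (t : ℕ) : ℤ := S1 (w.take t)
/-- partial y-sums -/
def BS (w : Word) (t : ℕ) : ℤ := S2 (w.take t)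

@[simp] theorem AS_zero (w : Word) : AS w 0 = 0 := rfl
@[simp] theorem BS_zero (w : Word) : BS w 0 = 0 := rfl
@[simp] theorem AS_cons_succ (l : Letter) (t : Word) (j : ℕ) :
    AS (l :: t) (j + 1) = xL l + AS t j := by simp [AS]
@[simp] theorem BS_cons_succ (l : Letter) (t : Word) (j : ℕ) :
    BS (l :: t) (j + 1) = yL l + BS t j := by simp [BS]

theorem AS_succ (w : Word) (t : ℕ) (ht : t < w.length) :
    AS w (t + 1) = AS w t + xL (w.getD t lα) := by
  rw [AS, AS, List.take_succ, List.getElem?_eq_getElem ht, S1_append, List.getD_eq_getElem w lα ht]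
  simp [S1]

theorem BS_succ (w : Word) (t : ℕ) (ht : t < w.length) :
    BS w (t + 1) = BS w t + yL (w.getD t lα) := by
  rw [BS, BS, List.take_succ, List.getElem?_eq_getElem ht, S2_append, List.getD_eq_getElem w lα ht]
  simp [S2]

theorem sum_y (w : Word) : ∑ j ∈ Finset.range w.length, yL (w.getD j lα) = S2 w := by
  induction w with
  | nil => simp
  | cons l t ih =>
    rw [List.length_cons, Finset.sum_range_succ']
    simp only [List.getD_cons_succ, List.getD_cons_zero, S2_cons, ih]
    ring

theorem sum_absy (w : Word) :
    ∑ j ∈ Finset.range w.length, |yL (w.getD j lα)| =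
      (w.count lβ : ℤ) + (w.count lβinv : ℤ) := by
  induction w with
  | nil => simp
  | cons l t ih =>
    rw [List.length_cons, Finset.sum_range_succ']
    simp only [List.getD_cons_succ, List.getD_cons_zero, ih]
    rcases letter_cases l with h | h | h | h <;> subst h <;>
      simp [List.count_cons, lα, lαinv, lβ, lβinv, yL] <;> push_cast <;> ring

theorem sum_absx (w : Word) :
    ∑ j ∈ Finset.range w.length, |xL (w.getD j lα)| =
      (w.count lα : ℤ) + (w.count lαinv : ℤ) := by
  induction w with
  | nil => simp
  | cons l t ih =>
    rw [List.length_cons, Finset.sum_range_succ']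
    simp only [List.getD_cons_succ, List.getD_cons_zero, ih]
    rcases letter_cases l with h | h | h | h <;> subst h <;>
      simp [List.count_cons, lα, lαinv, lβ, lβinv, xL] <;> push_cast <;> ring

theorem sum_x (w : Word) : ∑ j ∈ Finset.range w.length, xL (w.getD j lα) = S1 w := by
  induction w with
  | nil => simp
  | cons l t ih =>
    rw [List.length_cons, Finset.sum_range_succ']
    simp only [List.getD_cons_succ, List.getD_cons_zero, S1_cons, ih]
    ring

theorem S3_sum (w : Word) :
    ∑ j ∈ Finset.range w.length, yL (w.getD j lα) * AS w j = S3 w := by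
  induction w with
  | nil => simp
  | cons l t ih =>
    rw [List.length_cons, Finset.sum_range_succ']
    simp only [List.getD_cons_succ, List.getD_cons_zero, AS_cons_succ, AS_zero]
    rw [S3_cons]
    have : ∀ j ∈ Finset.range t.length, yL (t.getD j lα) * (xL l + AS t j)
        = xL l * yL (t.getD j lα) + yL (t.getD j lα) * AS t j := fun j _ => by ring
    rw [Finset.sum_congr rfl this, Finset.sum_add_distrib, ← Finset.mul_sum, sum_y, ih]
    ring

theorem S3'_sum (w : Word) :
    S3 w + ∑ j ∈ Finset.range w.length, xL (w.getD j lα) * BS w j = S1 w * S2 w := by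
  induction w with
  | nil => simp
  | cons l t ih =>
    rw [List.length_cons, Finset.sum_range_succ']
    simp only [List.getD_cons_succ, List.getD_cons_zero, BS_cons_succ, BS_zero, S3_cons]
    have : ∀ j ∈ Finset.range t.length, xL (t.getD j lα) * (yL l + BS t j)
        = yL l * xL (t.getD j lα) + xL (t.getD j lα) * BS t j := fun j _ => by ring
    rw [Finset.sum_congr rfl this, Finset.sum_add_distrib, ← Finset.mul_sum, sum_x,
      S1_cons, S2_cons]
    have hxy : xL l * yL l = 0 := by
      rcases letter_cases l with h | h | h | h <;> subst h <;> simp [xL, yL, lα, lαinv, lβ, lβinv]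
    nlinarith [ih]

theorem S1_count (w : Word) : S1 w = (w.count lα : ℤ) - (w.count lαinv : ℤ) := by
  induction w with
  | nil => simp
  | cons l t ih =>
    rw [S1_cons, ih]
    rcases letter_cases l with h | h | h | h <;> subst h <;>
      simp [List.count_cons, lα, lαinv, lβ, lβinv, xL] <;> push_cast <;> ring

theorem S2_count (w : Word) : S2 w = (w.count lβ : ℤ) - (w.count lβinv : ℤ) := by
  induction w with
  | nil => simp
  | cons l t ih =>
    rw [S2_cons, ih]
    rcases letter_cases l with h | h | h | h <;> subst h <;>
      simp [List.count_cons, lα, lαinv, lβ, lβinv, yL] <;> push_cast <;> ring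

theorem length_count (w : Word) :
    w.length = w.count lα + w.count lαinv + w.count lβ + w.count lβinv := by
  induction w with
  | nil => simp
  | cons l t ih =>
    rcases letter_cases l with h | h | h | h <;> subst h <;>
      simp [List.count_cons, lα, lαinv, lβ, lβinv, ih] <;> omega

/-- bounds for sums of x-steps by counts -/
theorem S1_le_count (L : Word) : S1 L ≤ (L.count lα : ℤ) ∧ -(L.count lαinv : ℤ) ≤ S1 L := by
  rw [S1_count]; constructor <;> simp

theorem S2_le_count (L : Word) : S2 L ≤ (L.count lβ : ℤ) ∧ -(L.count lβinv : ℤ) ≤ S2 L := by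
  rw [S2_count]; constructor <;> simp

theorem AS_sub (w : Word) (s t : ℕ) (hst : s ≤ t) :
    AS w t - AS w s = S1 ((w.drop s).take (t - s)) := by
  have h : t = s + (t - s) := by omega
  calc AS w t - AS w s = AS w (s + (t - s)) - AS w s := by rw [← h]
    _ = S1 ((w.drop s).take (t - s)) := by rw [AS, AS, List.take_add, S1_append]; ring

theorem BS_sub (w : Word) (s t : ℕ) (hst : s ≤ t) :
    BS w t - BS w s = S2 ((w.drop s).take (t - s)) := by
  have h : t = s + (t - s) := by omega
  calc BS w t - BS w s = BS w (s + (t - s)) - BS w s := by rw [← h]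
    _ = S2 ((w.drop s).take (t - s)) := by rw [BS, BS, List.take_add, S2_append]; ring

theorem seg_sublist (w : Word) (s d : ℕ) : (((w.drop s).take d)).Sublist w :=
  (List.take_sublist d (w.drop s)).trans (List.drop_sublist s w)

theorem AS_seg (w : Word) (s t : ℕ) (hst : s ≤ t) :
    AS w t - AS w s ≤ (w.count lα : ℤ) ∧ -((w.count lαinv : ℤ)) ≤ AS w t - AS w s := by
  rw [AS_sub w s t hst]
  obtain ⟨h1, h2⟩ := S1_le_count ((w.drop s).take (t - s))
  have c1 := (seg_sublist w s (t - s)).count_le lα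
  have c2 := (seg_sublist w s (t - s)).count_le lαinv
  constructor
  · exact h1.trans (by exact_mod_cast c1)
  · refine le_trans ?_ h2
    simp only [neg_le_neg_iff]
    exact_mod_cast c2

theorem BS_seg (w : Word) (s t : ℕ) (hst : s ≤ t) :
    BS w t - BS w s ≤ (w.count lβ : ℤ) ∧ -((w.count lβinv : ℤ)) ≤ BS w t - BS w s := by
  rw [BS_sub w s t hst]
  obtain ⟨h1, h2⟩ := S2_le_count ((w.drop s).take (t - s))
  have c1 := (seg_sublist w s (t - s)).count_le lβ
  have c2 := (seg_sublist w s (t - s)).count_le lβinv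
  constructor
  · exact h1.trans (by exact_mod_cast c1)
  · refine le_trans ?_ h2
    simp only [neg_le_neg_iff]
    exact_mod_cast c2

theorem SUMID (n : ℕ) (c Aj : ℕ → ℤ) (M m : ℤ)
    (hsum : ∑ j ∈ Finset.range n, c j = 0) :
    ∑ j ∈ Finset.range n, c j * (2 * Aj j - (M + m)) =
      2 * ∑ j ∈ Finset.range n, c j * Aj j := by
  have h : ∀ j ∈ Finset.range n, c j * (2 * Aj j - (M + m)) =
      2 * (c j * Aj j) - (M + m) * c j := fun j _ => by ring
  rw [Finset.sum_congr rfl h, Finset.sum_sub_distrib, ← Finset.mul_sum, ← Finset.mul_sum, hsum]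
  ring

theorem TERM (c a M m : ℤ) (hc : c = 1 ∨ c = -1 ∨ c = 0) (h1 : m ≤ a) (h2 : a ≤ M) :
    c * (2 * a - (M + m)) ≤ |c| * (M - m) := by
  rcases hc with h | h | h <;> subst h <;> simp <;> linarith

theorem INEQ (n : ℕ) (c Aj : ℕ → ℤ) (M m : ℤ)
    (hc : ∀ j, j < n → (c j = 1 ∨ c j = -1 ∨ c j = 0))
    (hsum : ∑ j ∈ Finset.range n, c j = 0)
    (hrange : ∀ j, j < n → m ≤ Aj j ∧ Aj j ≤ M) :
    2 * ∑ j ∈ Finset.range n, c j * Aj j ≤ (∑ j ∈ Finset.range n, |c j|) * (M - m) := by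
  rw [← SUMID n c Aj M m hsum, Finset.sum_mul]
  refine Finset.sum_le_sum fun j hj => ?_
  have hj' := Finset.mem_range.mp hj
  exact TERM _ _ _ _ (hc j hj') (hrange j hj').1 (hrange j hj').2

theorem EQAN (n k : ℕ) (hk : 0 < k) (c Aj : ℕ → ℤ) (M m : ℤ)
    (hc : ∀ j, j < n → (c j = 1 ∨ c j = -1 ∨ c j = 0))
    (hsum : ∑ j ∈ Finset.range n, c j = 0)
    (hrange : ∀ j, j < n → m ≤ Aj j ∧ Aj j ≤ M)
    (habs : ∑ j ∈ Finset.range n, |c j| = 2 * (k : ℤ))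
    (hMm : M - m ≤ (k : ℤ))
    (hS : ∑ j ∈ Finset.range n, c j * Aj j = (k : ℤ) ^ 2) :
    M - m = (k : ℤ) ∧ ∀ j, j < n → (c j = 1 → Aj j = M) ∧ (c j = -1 → Aj j = m) := by
  have hineq := INEQ n c Aj M m hc hsum hrange
  rw [hS, habs] at hineq
  have hMm' : M - m = (k : ℤ) := by nlinarith
  refine ⟨hMm', ?_⟩
  have hzero : ∑ j ∈ Finset.range n, (|c j| * (M - m) - c j * (2 * Aj j - (M + m))) = 0 := by
    rw [Finset.sum_sub_distrib, SUMID n c Aj M m hsum, ← Finset.sum_mul, habs, hS, hMm']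
    ring
  have hnn : ∀ j ∈ Finset.range n, 0 ≤ |c j| * (M - m) - c j * (2 * Aj j - (M + m)) := by
    intro j hj
    have hj' := Finset.mem_range.mp hj
    have := TERM (c j) (Aj j) M m (hc j hj') (hrange j hj').1 (hrange j hj').2
    linarith
  have hall := (Finset.sum_eq_zero_iff_of_nonneg hnn).mp hzero
  intro j hj
  have h0 := hall j (Finset.mem_range.mpr hj)
  constructor
  · intro h1; rw [h1] at h0; simp at h0; linarith
  · intro h1; rw [h1] at h0; simp at h0; linarith

/-- the A-coordinate along the model square word -/
def fA (k t : ℕ) : ℤ :=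
  if t ≤ k then -(t : ℤ) else if t ≤ 2*k then -(k : ℤ)
  else if t ≤ 3*k then (t : ℤ) - 3*k else 0
/-- the B-coordinate along the model square word -/
def fB (k t : ℕ) : ℤ :=
  if t ≤ k then 0 else if t ≤ 2*k then (k : ℤ) - t
  else if t ≤ 3*k then -(k : ℤ) else (t : ℤ) - 4*k
/-- the letters of the model square word -/
def sqletter (k t : ℕ) : Letter :=
  if t < k then lαinv else if t < 2*k then lβinv else if t < 3*k then lα else lβ

theorem xL_lα : xL lα = 1 := rfl
theorem xL_lαinv : xL lαinv = -1 := rfl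
theorem xL_lβ : xL lβ = 0 := rfl
theorem xL_lβinv : xL lβinv = 0 := rfl
theorem yL_lα : yL lα = 0 := rfl
theorem yL_lαinv : yL lαinv = 0 := rfl
theorem yL_lβ : yL lβ = 1 := rfl
theorem yL_lβinv : yL lβinv = -1 := rfl

section March

variable (k : ℕ) (v : Word)

theorem march_step (hk : 0 < k) (hlen : v.length = 4*k)
    (h1 : ∀ t, t < v.length → v.getD t lα = lα → BS v t = -(k:ℤ))
    (h2 : ∀ t, t < v.length → v.getD t lα = lβ → AS v t = 0)
    (h3 : ∀ t, t < v.length → v.getD t lα = lαinv → BS v t = 0)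
    (h4 : ∀ t, t < v.length → v.getD t lα = lβinv → AS v t = -(k:ℤ))
    (h5 : ∀ t, t ≤ v.length →
      -(k:ℤ) ≤ AS v t ∧ AS v t ≤ 0 ∧ -(k:ℤ) ≤ BS v t ∧ BS v t ≤ 0)
    (t : ℕ) (ht : t < 4*k)
    (hA : AS v t = fA k t) (hB : BS v t = fB k t) :
    v.getD t lα = sqletter k t ∧ AS v (t+1) = fA k (t+1) ∧ BS v (t+1) = fB k (t+1) := by
  have hlt : t < v.length := by omega
  have hAs := AS_succ v t hlt
  have hBs := BS_succ v t hlt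
  have h5' := h5 (t+1) (by omega)
  rcases letter_cases (v.getD t lα) with hl | hl | hl | hl
  · -- lα : phase 3
    rw [hl, xL_lα] at hAs
    rw [hl, yL_lα] at hBs
    have hc := h1 t hlt hl
    have hphase : 2*k ≤ t ∧ t < 3*k := by
      simp only [fA, fB] at hA hB
      split_ifs at hA hB <;> omega
    refine ⟨?_, ?_, ?_⟩
    · rw [hl, sqletter, if_neg (by omega), if_neg (by omega), if_pos (by omega)]
    · simp only [fA] at hA ⊢; split_ifs at hA ⊢ <;> omega
    · simp only [fB] at hB ⊢; split_ifs at hB ⊢ <;> omega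
  · -- lαinv : phase 1
    rw [hl, xL_lαinv] at hAs
    rw [hl, yL_lαinv] at hBs
    have hc := h3 t hlt hl
    have hphase : t < k := by
      simp only [fA, fB] at hA hB
      split_ifs at hA hB <;> omega
    refine ⟨?_, ?_, ?_⟩
    · rw [hl, sqletter, if_pos (by omega)]
    · simp only [fA] at hA ⊢; split_ifs at hA ⊢ <;> omega
    · simp only [fB] at hB ⊢; split_ifs at hB ⊢ <;> omega
  · -- lβ : phase 4
    rw [hl, xL_lβ] at hAs
    rw [hl, yL_lβ] at hBs
    have hc := h2 t hlt hl
    have hphase : 3*k ≤ t := by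
      simp only [fA, fB] at hA hB
      split_ifs at hA hB <;> omega
    refine ⟨?_, ?_, ?_⟩
    · rw [hl, sqletter, if_neg (by omega), if_neg (by omega), if_neg (by omega)]
    · simp only [fA] at hA ⊢; split_ifs at hA ⊢ <;> omega
    · simp only [fB] at hB ⊢; split_ifs at hB ⊢ <;> omega
  · -- lβinv : phase 2
    rw [hl, xL_lβinv] at hAs
    rw [hl, yL_lβinv] at hBs
    have hc := h4 t hlt hl
    have hphase : k ≤ t ∧ t < 2*k := by
      simp only [fA, fB] at hA hB
      split_ifs at hA hB <;> omega
    refine ⟨?_, ?_, ?_⟩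
    · rw [hl, sqletter, if_neg (by omega), if_pos (by omega)]
    · simp only [fA] at hA ⊢; split_ifs at hA ⊢ <;> omega
    · simp only [fB] at hB ⊢; split_ifs at hB ⊢ <;> omega

theorem march (hk : 0 < k) (hlen : v.length = 4*k)
    (h1 : ∀ t, t < v.length → v.getD t lα = lα → BS v t = -(k:ℤ))
    (h2 : ∀ t, t < v.length → v.getD t lα = lβ → AS v t = 0)
    (h3 : ∀ t, t < v.length → v.getD t lα = lαinv → BS v t = 0)
    (h4 : ∀ t, t < v.length → v.getD t lα = lβinv → AS v t = -(k:ℤ))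
    (h5 : ∀ t, t ≤ v.length →
      -(k:ℤ) ≤ AS v t ∧ AS v t ≤ 0 ∧ -(k:ℤ) ≤ BS v t ∧ BS v t ≤ 0) :
    v = List.replicate k lαinv ++ (List.replicate k lβinv ++
      (List.replicate k lα ++ List.replicate k lβ)) := by
  have key : ∀ t, t ≤ 4*k → AS v t = fA k t ∧ BS v t = fB k t := by
    intro t
    induction t with
    | zero => intro _; simp [fA, fB, if_pos (Nat.zero_le k)]
    | succ s ih =>
      intro hs
      obtain ⟨hA, hB⟩ := ih (by omega)
      exact (march_step k v hk hlen h1 h2 h3 h4 h5 s (by omega) hA hB).2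
  have letters : ∀ t, t < 4*k → v.getD t lα = sqletter k t := by
    intro t ht
    obtain ⟨hA, hB⟩ := key t (by omega)
    exact (march_step k v hk hlen h1 h2 h3 h4 h5 t ht hA hB).1
  have hlen2 : (List.replicate k lαinv ++ (List.replicate k lβinv ++
      (List.replicate k lα ++ List.replicate k lβ))).length = 4*k := by
    simp; ring
  refine List.ext_getElem (by omega) fun t h₁ h₂ => ?_
  have hlt : t < 4*k := by omega
  have hsq : (List.replicate k lαinv ++ (List.replicate k lβinv ++
      (List.replicate k lα ++ List.replicate k lβ)))[t] = sqletter k t := by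
    rcases Nat.lt_or_ge t k with h | h
    · rw [List.getElem_append_left (by simp; omega), List.getElem_replicate,
        sqletter, if_pos h]
    · rw [List.getElem_append_right (by simp; omega)]
      rcases Nat.lt_or_ge t (2*k) with h' | h'
      · rw [List.getElem_append_left (by simp; omega), List.getElem_replicate,
          sqletter, if_neg (by omega), if_pos (by omega)]
      · rw [List.getElem_append_right (by simp; omega)]
        rcases Nat.lt_or_ge t (3*k) with h'' | h''
        · rw [List.getElem_append_left (by simp; omega), List.getElem_replicate,
            sqletter, if_neg (by omega), if_neg (by omega), if_pos (by omega)]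
        · rw [List.getElem_append_right (by simp; omega), List.getElem_replicate,
            sqletter, if_neg (by omega), if_neg (by omega), if_neg (by omega)]
  rw [hsq, ← letters t hlt, List.getD_eq_getElem v lα h₁]

end March

theorem AS_length (w : Word) : AS w w.length = S1 w := by rw [AS, List.take_length]
theorem BS_length (w : Word) : BS w w.length = S2 w := by rw [BS, List.take_length]

theorem corner (w : Word) (k : ℕ) (hk : 0 < k) (MA MB : ℤ)
    (hn : w.length = 4*k)
    (hA0 : S1 w = 0) (hB0 : S2 w = 0)
    (hrA : ∀ t, t ≤ w.length → MA - k ≤ AS w t ∧ AS w t ≤ MA)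
    (hrB : ∀ t, t ≤ w.length → MB - k ≤ BS w t ∧ BS w t ≤ MB)
    (c1 : ∀ t, t < w.length → w.getD t lα = lα → BS w t = MB - k)
    (c2 : ∀ t, t < w.length → w.getD t lα = lβ → AS w t = MA)
    (c3 : ∀ t, t < w.length → w.getD t lα = lαinv → BS w t = MB)
    (c4 : ∀ t, t < w.length → w.getD t lα = lβinv → AS w t = MA - k)
    (hex : ∃ t, t ≤ w.length ∧ BS w t = MB) :
    ∃ tst, tst ≤ w.length ∧ AS w tst = MA ∧ BS w tst = MB := by
  have claim : ∀ d : ℕ, ∀ t, t ≤ w.length → BS w t = MB → AS w t = MA - (d:ℤ) →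
      ∃ tst, tst ≤ w.length ∧ AS w tst = MA ∧ BS w tst = MB := by
    intro d
    induction d with
    | zero => intro t ht hB hA; exact ⟨t, ht, by simpa using hA, hB⟩
    | succ d ih =>
      intro t ht hB hA
      set t₁ := if t = 0 then w.length else t with ht₁def
      have hBt₁ : BS w t₁ = MB := by
        rw [ht₁def]; split_ifs with h
        · rw [BS_length, hB0, ← hB, h, BS_zero]
        · exact hB
      have hAt₁ : AS w t₁ = MA - ((d:ℤ) + 1) := by
        rw [ht₁def]; split_ifs with h
        · rw [AS_length, hA0]; rw [h, AS_zero] at hA; push_cast at hA ⊢; linarith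
        · push_cast; push_cast at hA; exact hA
      have ht₁pos : 1 ≤ t₁ := by
        rw [ht₁def]; split_ifs with h
        · omega
        · omega
      have ht₁le : t₁ ≤ w.length := by
        rw [ht₁def]; split_ifs <;> omega
      have hlt : t₁ - 1 < w.length := by omega
      have hAs : AS w t₁ = AS w (t₁ - 1) + xL (w.getD (t₁-1) lα) := by
        have := AS_succ w (t₁ - 1) hlt
        rwa [show t₁ - 1 + 1 = t₁ by omega] at this
      have hBs : BS w t₁ = BS w (t₁ - 1) + yL (w.getD (t₁-1) lα) := by
        have := BS_succ w (t₁ - 1) hlt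
        rwa [show t₁ - 1 + 1 = t₁ by omega] at this
      have hrB' := hrB (t₁ - 1) (by omega)
      have hrA' := hrA (t₁ - 1) (by omega)
      rcases letter_cases (w.getD (t₁-1) lα) with hl | hl | hl | hl
      · exfalso
        have := c1 (t₁-1) hlt hl
        rw [hl, yL_lα] at hBs
        have hk' : (0:ℤ) < k := by exact_mod_cast hk
        linarith
      · -- lαinv : step back
        have hc := c3 (t₁-1) hlt hl
        rw [hl, xL_lαinv] at hAs
        refine ih (t₁ - 1) (by omega) hc ?_
        rw [hAt₁] at hAs; push_cast; linarith
      · exfalso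
        have := c2 (t₁-1) hlt hl
        rw [hl, xL_lβ] at hAs
        rw [hAt₁, this] at hAs
        have : (0:ℤ) ≤ d := by positivity
        linarith
      · exfalso
        have hc := c4 (t₁-1) hlt hl
        rw [hl, yL_lβinv] at hBs
        rw [hBt₁] at hBs
        linarith [hrB'.2]
  obtain ⟨t₀, ht₀, hBt₀⟩ := hex
  have h0 := hrA t₀ ht₀
  refine claim (MA - AS w t₀).toNat t₀ ht₀ hBt₀ ?_
  rw [Int.toNat_of_nonneg (by linarith [h0.2])]
  ring

theorem S1_rotate (w : Word) (r : ℕ) : S1 (w.rotate r) = S1 w :=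
  ((w.rotate_perm r).map xL).sum_eq
theorem S2_rotate (w : Word) (r : ℕ) : S2 (w.rotate r) = S2 w :=
  ((w.rotate_perm r).map yL).sum_eq

theorem AS_rotate (w : Word) (r t : ℕ) (hr : r ≤ w.length) (ht : t ≤ w.length)
    (h0 : S1 w = 0) :
    AS (w.rotate r) t =
      AS w (if t ≤ w.length - r then r + t else t - (w.length - r)) - AS w r := by
  rw [List.rotate_eq_drop_append_take hr]
  split_ifs with h
  · rw [AS, List.take_append_of_le_length (by rw [List.length_drop]; omega)]
    have h2 := AS_sub w r (r + t) (by omega)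
    rw [show r + t - r = t by omega] at h2
    rw [AS] at h2 ⊢
    linarith
  · rw [AS, List.take_append, List.take_of_length_le (by rw [List.length_drop]; omega),
      S1_append, List.length_drop, List.take_take,
      show (t - (w.length - r)) ⊓ r = t - (w.length - r) by omega]
    have hdrop : S1 (w.drop r) = - AS w r := by
      have := S1_append (w.take r) (w.drop r)
      rw [List.take_append_drop, h0] at this
      rw [← AS] at this
      linarith
    rw [hdrop, ← AS]
    ring

theorem BS_rotate (w : Word) (r t : ℕ) (hr : r ≤ w.length) (ht : t ≤ w.length)
    (h0 : S2 w = 0) :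
    BS (w.rotate r) t =
      BS w (if t ≤ w.length - r then r + t else t - (w.length - r)) - BS w r := by
  rw [List.rotate_eq_drop_append_take hr]
  split_ifs with h
  · rw [BS, List.take_append_of_le_length (by rw [List.length_drop]; omega)]
    have h2 := BS_sub w r (r + t) (by omega)
    rw [show r + t - r = t by omega] at h2
    rw [BS] at h2 ⊢
    linarith
  · rw [BS, List.take_append, List.take_of_length_le (by rw [List.length_drop]; omega),
      S2_append, List.length_drop, List.take_take,
      show (t - (w.length - r)) ⊓ r = t - (w.length - r) by omega]
    have hdrop : S2 (w.drop r) = - BS w r := by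
      have := S2_append (w.take r) (w.drop r)
      rw [List.take_append_drop, h0] at this
      rw [← BS] at this
      linarith
    rw [hdrop, ← BS]
    ring

/-- transfer of states and letters along a rotation -/
theorem rotate_state (w : Word) (r t : ℕ) (hr : r ≤ w.length) (ht : t < w.length)
    (h0A : S1 w = 0) (h0B : S2 w = 0) :
    (w.rotate r).getD t lα = w.getD ((t + r) % w.length) lα ∧
      AS (w.rotate r) t = AS w ((t + r) % w.length) - AS w r ∧
      BS (w.rotate r) t = BS w ((t + r) % w.length) - BS w r := by
  have hn : 0 < w.length := by omega
  have hmod : (t + r) % w.length = if t + r < w.length then t + r else t + r - w.length := by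
    split_ifs with h
    · exact Nat.mod_eq_of_lt h
    · rw [Nat.mod_eq_sub_mod (by omega), Nat.mod_eq_of_lt (by omega)]
  have hAr := AS_rotate w r t hr (le_of_lt ht) h0A
  have hBr := BS_rotate w r t hr (le_of_lt ht) h0B
  refine ⟨?_, ?_, ?_⟩
  · rw [List.getD_eq_getElem _ lα (by rw [List.length_rotate]; exact ht),
      List.getElem_rotate,
      List.getD_eq_getElem _ lα (by exact Nat.mod_lt _ hn)]
  · rw [hAr, hmod]
    rcases Nat.lt_trichotomy (t + r) w.length with h | h | h
    · rw [if_pos (by omega), if_pos (by omega), show r + t = t + r by ring]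
    · rw [if_pos (by omega), if_neg (by omega), show r + t = w.length by omega,
        show t + r - w.length = 0 by omega, AS_length, h0A, AS_zero]
    · rw [if_neg (by omega), if_neg (by omega), show t - (w.length - r) = t + r - w.length by omega]
  · rw [hBr, hmod]
    rcases Nat.lt_trichotomy (t + r) w.length with h | h | h
    · rw [if_pos (by omega), if_pos (by omega), show r + t = t + r by ring]
    · rw [if_pos (by omega), if_neg (by omega), show r + t = w.length by omega,
        show t + r - w.length = 0 by omega, BS_length, h0B, BS_zero]
    · rw [if_neg (by omega), if_neg (by omega), show t - (w.length - r) = t + r - w.length by omega]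

theorem mk_replicate (l : Letter) (m : ℕ) :
    FreeGroup.mk (List.replicate m l) = (FreeGroup.mk [l]) ^ m := by
  induction m with
  | zero => rfl
  | succ m ih =>
    rw [List.replicate_succ, show (l :: List.replicate m l) = [l] ++ List.replicate m l from rfl,
      ← FreeGroup.mul_mk, ih, pow_succ']

theorem mk_lα : FreeGroup.mk [lα] = Wα := rfl
theorem mk_lβ : FreeGroup.mk [lβ] = Wβ := rfl
theorem mk_lαinv : FreeGroup.mk [lαinv] = Wα⁻¹ := by
  have : Wα = FreeGroup.mk [(false, true)] := rfl
  rw [this, FreeGroup.inv_mk]; rfl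
theorem mk_lβinv : FreeGroup.mk [lβinv] = Wβ⁻¹ := by
  have : Wβ = FreeGroup.mk [(true, true)] := rfl
  rw [this, FreeGroup.inv_mk]; rfl

theorem yL_values (l : Letter) : yL l = 1 ∨ yL l = -1 ∨ yL l = 0 := by
  rcases letter_cases l with h | h | h | h <;> subst h <;> simp [yL, lα, lαinv, lβ, lβinv]
theorem xL_values (l : Letter) : xL l = 1 ∨ xL l = -1 ∨ xL l = 0 := by
  rcases letter_cases l with h | h | h | h <;> subst h <;> simp [xL, lα, lαinv, lβ, lβinv]

set_option maxHeartbeats 1000000 in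
/-- if a word `g` of length `n` with `a(g) = b(g) = 0` has
`ν(g) = (n/4)²` (i.e. `16 ν(g) = n²`), then `n_α = n_β = n/4` and `g` is conjugate in
`F` to the commutator `⁅α^{n/4}, β^{n/4}⁆`. -/
theorem statement_13 (w : Word) (ha : aF (FreeGroup.mk w) = 0) (hb : bF (FreeGroup.mk w) = 0)
    (hν : 16 * νF (FreeGroup.mk w) = (w.length : ℤ) ^ 2) :
    4 * w.count lα = w.length ∧ 4 * w.count lβ = w.length ∧
    IsConj (⁅Wα ^ (w.length / 4), Wβ ^ (w.length / 4)⁆ : F) (FreeGroup.mk w) := by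
  classical
  -- translate hypotheses to combinatorial data
  have haS : S1 w = 0 := by rw [← aF_mk]; exact ha
  have hbS : S2 w = 0 := by rw [← bF_mk]; exact hb
  have hν' : 16 * S3 w = (w.length : ℤ)^2 := by
    rw [nuF_mk, haS, hbS] at hν; simpa using hν
  have hcZa : (w.count lα : ℤ) - w.count lαinv = 0 := by rw [← S1_count]; exact haS
  have hcZb : (w.count lβ : ℤ) - w.count lβinv = 0 := by rw [← S2_count]; exact hbS
  have hA' : w.count lαinv = w.count lα := by
    exact_mod_cast (by linarith : (w.count lαinv : ℤ) = w.count lα)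
  have hB' : w.count lβinv = w.count lβ := by
    exact_mod_cast (by linarith : (w.count lβinv : ℤ) = w.count lβ)
  have hlen4 := length_count w
  -- maxima and minima of the partial-sum walks
  have hne : ((Finset.range (w.length+1)).image (AS w)).Nonempty :=
    ⟨AS w 0, Finset.mem_image_of_mem _ (Finset.mem_range.mpr (by omega))⟩
  have hneB : ((Finset.range (w.length+1)).image (BS w)).Nonempty :=
    ⟨BS w 0, Finset.mem_image_of_mem _ (Finset.mem_range.mpr (by omega))⟩
  set MA := ((Finset.range (w.length+1)).image (AS w)).max' hne with hMAdef
  set mA := ((Finset.range (w.length+1)).image (AS w)).min' hne with hmAdef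
  set MB := ((Finset.range (w.length+1)).image (BS w)).max' hneB with hMBdef
  set mB := ((Finset.range (w.length+1)).image (BS w)).min' hneB with hmBdef
  have hMA : ∀ t, t ≤ w.length → AS w t ≤ MA := fun t ht =>
    Finset.le_max' _ _ (Finset.mem_image_of_mem _ (Finset.mem_range.mpr (by omega)))
  have hmA : ∀ t, t ≤ w.length → mA ≤ AS w t := fun t ht =>
    Finset.min'_le _ _ (Finset.mem_image_of_mem _ (Finset.mem_range.mpr (by omega)))
  have hMB : ∀ t, t ≤ w.length → BS w t ≤ MB := fun t ht =>
    Finset.le_max' _ _ (Finset.mem_image_of_mem _ (Finset.mem_range.mpr (by omega)))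
  have hmB : ∀ t, t ≤ w.length → mB ≤ BS w t := fun t ht =>
    Finset.min'_le _ _ (Finset.mem_image_of_mem _ (Finset.mem_range.mpr (by omega)))
  have hMAmem : ∃ t, t ≤ w.length ∧ AS w t = MA := by
    obtain ⟨t, ht, he⟩ := Finset.mem_image.mp (Finset.max'_mem _ hne)
    exact ⟨t, by have := Finset.mem_range.mp ht; omega, he⟩
  have hmAmem : ∃ t, t ≤ w.length ∧ AS w t = mA := by
    obtain ⟨t, ht, he⟩ := Finset.mem_image.mp (Finset.min'_mem _ hne)
    exact ⟨t, by have := Finset.mem_range.mp ht; omega, he⟩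
  have hMBmem : ∃ t, t ≤ w.length ∧ BS w t = MB := by
    obtain ⟨t, ht, he⟩ := Finset.mem_image.mp (Finset.max'_mem _ hneB)
    exact ⟨t, by have := Finset.mem_range.mp ht; omega, he⟩
  have hmBmem : ∃ t, t ≤ w.length ∧ BS w t = mB := by
    obtain ⟨t, ht, he⟩ := Finset.mem_image.mp (Finset.min'_mem _ hneB)
    exact ⟨t, by have := Finset.mem_range.mp ht; omega, he⟩
  -- gap bounds
  have gapA : MA - mA ≤ (w.count lα : ℤ) := by
    obtain ⟨tM, htM, heM⟩ := hMAmem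
    obtain ⟨tm, htm, hem⟩ := hmAmem
    rcases le_total tm tM with h | h
    · have := (AS_seg w tm tM h).1
      rw [heM, hem] at this; linarith
    · have h2 := (AS_seg w tM tm h).2
      rw [heM, hem] at h2
      have h3 : MA - mA ≤ (w.count lαinv : ℤ) := by linarith
      rw [hA'] at h3; exact h3
  have gapB : MB - mB ≤ (w.count lβ : ℤ) := by
    obtain ⟨tM, htM, heM⟩ := hMBmem
    obtain ⟨tm, htm, hem⟩ := hmBmem
    rcases le_total tm tM with h | h
    · have := (BS_seg w tm tM h).1
      rw [heM, hem] at this; linarith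
    · have h2 := (BS_seg w tM tm h).2
      rw [heM, hem] at h2
      have h3 : MB - mB ≤ (w.count lβinv : ℤ) := by linarith
      rw [hB'] at h3; exact h3
  have hMA0 : 0 ≤ MA := le_trans (by rw [AS_zero]) (hMA 0 (by omega))
  have hmA0 : mA ≤ 0 := le_trans (hmA 0 (by omega)) (by rw [AS_zero])
  have hMB0 : 0 ≤ MB := le_trans (by rw [BS_zero]) (hMB 0 (by omega))
  have hmB0 : mB ≤ 0 := le_trans (hmB 0 (by omega)) (by rw [BS_zero])
  -- the basic inequality
  have hineq := INEQ w.length (fun j => yL (w.getD j lα)) (AS w) MA mA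
    (fun j _ => yL_values _)
    (by rw [sum_y w]; exact hbS)
    (fun j hj => ⟨hmA j (le_of_lt hj), hMA j (le_of_lt hj)⟩)
  rw [S3_sum w, sum_absy w] at hineq
  have hlenZ : (w.length : ℤ) = 2 * w.count lα + 2 * w.count lβ := by
    have : w.length = 2 * w.count lα + 2 * w.count lβ := by omega
    exact_mod_cast this
  have hmul : (w.count lβ : ℤ) * (MA - mA) ≤ (w.count lβ : ℤ) * (w.count lα : ℤ) :=
    mul_le_mul_of_nonneg_left gapA (by positivity)
  have hBA : (w.count lβ : ℤ) = (w.count lα : ℤ) := by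
    rw [hB'] at hineq
    nlinarith [sq_nonneg ((w.count lα : ℤ) - (w.count lβ : ℤ)), hν', hineq, hmul]
  have hBAn : w.count lβ = w.count lα := by exact_mod_cast hBA
  set k := w.count lα with hkdef
  have hS3 : S3 w = (k : ℤ)^2 := by
    have h4 : (w.length : ℤ) = 4 * k := by rw [hlenZ, hBA]; ring
    have : 16 * S3 w = 16 * (k:ℤ)^2 := by rw [hν', h4]; ring
    linarith
  rcases Nat.eq_zero_or_pos k with hk0 | hk
  · -- degenerate case : the empty word
    have hn0 : w.length = 0 := by omega
    have hw : w = [] := List.length_eq_zero_iff.mp hn0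
    subst hw
    refine ⟨by simp <;> omega, by simp <;> omega, ?_⟩
    have h1 : FreeGroup.mk ([] : Word) = 1 := rfl
    simp only [List.length_nil, Nat.zero_div, pow_zero, h1]
    have h2 : (⁅(1:F), (1:F)⁆ : F) = 1 := by simp
    rw [h2]
  · -- main case
    have hnk : w.length = 4 * k := by omega
    have habsy : ∑ j ∈ Finset.range w.length, |yL (w.getD j lα)| = 2 * (k:ℤ) := by
      rw [sum_absy w, hB', hBAn]; push_cast; ring
    have habsx : ∑ j ∈ Finset.range w.length, |xL (w.getD j lα)| = 2 * (k:ℤ) := by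
      rw [sum_absx w, hA']; push_cast; ring
    have hEQ1 := EQAN w.length k hk (fun j => yL (w.getD j lα)) (AS w) MA mA
      (fun j _ => yL_values _)
      (by rw [sum_y w]; exact hbS)
      (fun j hj => ⟨hmA j (le_of_lt hj), hMA j (le_of_lt hj)⟩)
      habsy gapA
      (by rw [S3_sum w]; exact hS3)
    obtain ⟨hgapAeq, hcondy⟩ := hEQ1
    have hSx : ∑ j ∈ Finset.range w.length, xL (w.getD j lα) * (-BS w j) = (k:ℤ)^2 := by
      have hid := S3'_sum w
      rw [haS, zero_mul] at hid
      have h2 : ∑ j ∈ Finset.range w.length, xL (w.getD j lα) * BS w j = -((k:ℤ)^2) := by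
        linarith
      calc ∑ j ∈ Finset.range w.length, xL (w.getD j lα) * (-BS w j)
          = -∑ j ∈ Finset.range w.length, xL (w.getD j lα) * BS w j := by
            rw [← Finset.sum_neg_distrib]; exact Finset.sum_congr rfl fun j _ => by ring
        _ = (k:ℤ)^2 := by rw [h2]; ring
    have hsum2 : ∑ j ∈ Finset.range w.length, xL (w.getD j lα) = 0 := (sum_x w).trans haS
    have hrange2 : ∀ j, j < w.length → -MB ≤ -BS w j ∧ -BS w j ≤ -mB := fun j hj =>
      ⟨neg_le_neg (hMB j (le_of_lt hj)), neg_le_neg (hmB j (le_of_lt hj))⟩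
    have hMm2 : -mB - -MB ≤ (k:ℤ) := by linarith [gapB, hBA]
    have hEQ2 := EQAN w.length k hk (fun j => xL (w.getD j lα)) (fun j => -BS w j)
      (-mB) (-MB)
      (fun j _ => xL_values _)
      hsum2 hrange2 habsx hMm2 hSx
    obtain ⟨hgapBeq, hcondx⟩ := hEQ2
    have hgapB' : MB - mB = (k:ℤ) := by linarith
    have hgapA' : MA - mA = (k:ℤ) := hgapAeq
    -- letter conditions on w
    have C1 : ∀ t, t < w.length → w.getD t lα = lα → BS w t = mB := by
      intro t ht hl
      have h := (hcondx t ht).1 (show xL (w.getD t lα) = 1 by rw [hl]; rfl)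
      linarith
    have C3 : ∀ t, t < w.length → w.getD t lα = lαinv → BS w t = MB := by
      intro t ht hl
      have h := (hcondx t ht).2 (show xL (w.getD t lα) = -1 by rw [hl]; rfl)
      linarith
    have C2 : ∀ t, t < w.length → w.getD t lα = lβ → AS w t = MA := by
      intro t ht hl
      exact (hcondy t ht).1 (show yL (w.getD t lα) = 1 by rw [hl]; rfl)
    have C4 : ∀ t, t < w.length → w.getD t lα = lβinv → AS w t = mA := by
      intro t ht hl
      exact (hcondy t ht).2 (show yL (w.getD t lα) = -1 by rw [hl]; rfl)
    -- corner existence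
    obtain ⟨ts, hts, hAts, hBts⟩ := corner w k hk MA MB hnk haS hbS
      (fun t ht => ⟨by linarith [hmA t ht], hMA t ht⟩)
      (fun t ht => ⟨by linarith [hmB t ht], hMB t ht⟩)
      (fun t ht hl => by rw [C1 t ht hl]; linarith)
      C2 C3
      (fun t ht hl => by rw [C4 t ht hl]; linarith)
      hMBmem
    -- rotate to the corner
    set v := w.rotate ts with hvdef
    have hvlen : v.length = w.length := List.length_rotate w ts
    have hm1 : ∀ t, t < v.length → v.getD t lα = lα → BS v t = -(k:ℤ) := by
      intro t ht' hl
      have ht : t < w.length := by omega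
      obtain ⟨hg, hA2, hB2⟩ := rotate_state w ts t hts ht haS hbS
      have hj : (t + ts) % w.length < w.length := Nat.mod_lt _ (by omega)
      have hc := C1 _ hj (by rw [← hg]; exact hl)
      rw [hB2, hc, hBts]; linarith
    have hm2 : ∀ t, t < v.length → v.getD t lα = lβ → AS v t = 0 := by
      intro t ht' hl
      have ht : t < w.length := by omega
      obtain ⟨hg, hA2, hB2⟩ := rotate_state w ts t hts ht haS hbS
      have hj : (t + ts) % w.length < w.length := Nat.mod_lt _ (by omega)
      have hc := C2 _ hj (by rw [← hg]; exact hl)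
      rw [hA2, hc, hAts]; ring
    have hm3 : ∀ t, t < v.length → v.getD t lα = lαinv → BS v t = 0 := by
      intro t ht' hl
      have ht : t < w.length := by omega
      obtain ⟨hg, hA2, hB2⟩ := rotate_state w ts t hts ht haS hbS
      have hj : (t + ts) % w.length < w.length := Nat.mod_lt _ (by omega)
      have hc := C3 _ hj (by rw [← hg]; exact hl)
      rw [hB2, hc, hBts]; ring
    have hm4 : ∀ t, t < v.length → v.getD t lα = lβinv → AS v t = -(k:ℤ) := by
      intro t ht' hl
      have ht : t < w.length := by omega
      obtain ⟨hg, hA2, hB2⟩ := rotate_state w ts t hts ht haS hbS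
      have hj : (t + ts) % w.length < w.length := Nat.mod_lt _ (by omega)
      have hc := C4 _ hj (by rw [← hg]; exact hl)
      rw [hA2, hc, hAts]; linarith
    have hm5 : ∀ t, t ≤ v.length →
        -(k:ℤ) ≤ AS v t ∧ AS v t ≤ 0 ∧ -(k:ℤ) ≤ BS v t ∧ BS v t ≤ 0 := by
      intro t ht'
      rcases Nat.lt_or_ge t v.length with ht | ht
      · have htw : t < w.length := by omega
        obtain ⟨hg, hA2, hB2⟩ := rotate_state w ts t hts htw haS hbS
        have hj : (t + ts) % w.length ≤ w.length := le_of_lt (Nat.mod_lt _ (by omega))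
        rw [hA2, hB2, hAts, hBts]
        refine ⟨by linarith [hmA _ hj], by linarith [hMA _ hj],
          by linarith [hmB _ hj], by linarith [hMB _ hj]⟩
      · have htn : t = v.length := by omega
        rw [htn, AS_length, BS_length, hvdef, S1_rotate, S2_rotate, haS, hbS]
        have : (0:ℤ) ≤ k := by positivity
        refine ⟨by linarith, le_refl 0, by linarith, le_refl 0⟩
    have hsq := march k v hk (by omega) hm1 hm2 hm3 hm4 hm5
    -- final conclusions
    refine ⟨by omega, by omega, ?_⟩
    have hdiv : w.length / 4 = k := by omega
    rw [hdiv]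
    have hsplit : FreeGroup.mk w = FreeGroup.mk (w.take ts) * FreeGroup.mk (w.drop ts) := by
      rw [FreeGroup.mul_mk, List.take_append_drop]
    have hrot : FreeGroup.mk v = FreeGroup.mk (w.drop ts) * FreeGroup.mk (w.take ts) := by
      rw [hvdef, List.rotate_eq_drop_append_take hts, ← FreeGroup.mul_mk]
    have hsqmk : FreeGroup.mk v = Wα⁻¹^k * (Wβ⁻¹^k * (Wα^k * Wβ^k)) := by
      rw [hsq, ← FreeGroup.mul_mk, ← FreeGroup.mul_mk, ← FreeGroup.mul_mk,
        mk_replicate, mk_replicate, mk_replicate, mk_replicate,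
        mk_lαinv, mk_lβinv, mk_lα, mk_lβ]
    have hconj1 : IsConj (FreeGroup.mk v) (FreeGroup.mk w) := by
      rw [hsplit, hrot, isConj_iff]
      exact ⟨FreeGroup.mk (w.take ts), by group⟩
    have hconj2 : IsConj (⁅Wα^k, Wβ^k⁆ : F) (FreeGroup.mk v) := by
      rw [hsqmk, isConj_iff]
      refine ⟨(Wα^k * Wβ^k)⁻¹, ?_⟩
      rw [commutatorElement_def]
      group
    exact hconj2.trans hconj1


end
end
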